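/- Let $m\ge 1$, let $A$ be a Hermitian positive definite $m\times m$ complex matrix, and let $y$ be a random vector in $\mathbb C^m$ with density $\pi^{-m}e^{-\|y\|^2}$ with respect to Lebesgue measure on $\mathbb C^m$. Then for every $t>0$, $\mathbb P\big(y^*Ay\le t\big)\le \frac{C_m\,t^m}{\pi^m\,\det A}$, where $C_m$ denotes the Lebesgue volume of the unit ball $\{\xi\in\mathbb C^m:\|\xi\|\le 1\}$ (identifying $\mathbb C^m$ with $\mathbb R^{2m}$). -/

import Mathlib

open MeasureTheory Matrix
open scoped ComplexOrder Pointwise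

def sumEquiv (m : ℕ) : ((_ : Fin m) × Fin 2) ≃ (Fin m ⊕ Fin m) where
  toFun x := if x.2 = 0 then Sum.inl x.1 else Sum.inr x.1
  invFun x := Sum.elim (fun j => ⟨j, 0⟩) (fun j => ⟨j, 1⟩) x
  left_inv := by rintro ⟨j, a⟩; fin_cases a <;> simp
  right_inv := by rintro (j | j) <;> simp

lemma detReal_eq (m : ℕ) (B : Matrix (Fin m) (Fin m) ℂ) :
    LinearMap.det ((Matrix.toLin' B).restrictScalars ℝ) = Complex.normSq B.det := by
  classical
  let b : Module.Basis ((_ : Fin m) × Fin 2) ℝ (Fin m → ℂ) := Pi.basis fun _ => Complex.basisOneI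
  rw [← LinearMap.det_toMatrix b]
  set M := LinearMap.toMatrix b b ((Matrix.toLin' B).restrictScalars ℝ) with hM
  have hMe : ∀ j a k c, M ⟨j, a⟩ ⟨k, c⟩ = ![(B j k * Complex.basisOneI c).re, (B j k * Complex.basisOneI c).im] a := by
    intro j a k c
    rw [hM, LinearMap.toMatrix_apply]
    simp only [b, Pi.basis_apply, LinearMap.coe_restrictScalars, Matrix.toLin'_apply,
      Pi.basis_repr, Matrix.mulVec_single, Complex.coe_basisOneI_repr, Pi.smul_apply,
      op_smul_eq_mul, Matrix.col_apply]
  -- pass to ℂ and reindex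
  have key : (Complex.ofReal (M.det)) = Complex.normSq B.det := by
    rw [show ((M.det : ℝ) : ℂ) = ((algebraMap ℝ ℂ).mapMatrix M).det by
      rw [← RingHom.map_det]; rfl]
    have : ((algebraMap ℝ ℂ).mapMatrix M).det
        = (Matrix.reindex (sumEquiv m) (sumEquiv m) ((algebraMap ℝ ℂ).mapMatrix M)).det := by
      rw [Matrix.det_reindex_self]
    rw [this]
    have hblocks : Matrix.reindex (sumEquiv m) (sumEquiv m) ((algebraMap ℝ ℂ).mapMatrix M)
        = Matrix.fromBlocks (B.map (fun z => (z.re : ℂ))) (-(B.map (fun z => (z.im : ℂ))))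
            (B.map (fun z => (z.im : ℂ))) (B.map (fun z => (z.re : ℂ))) := by
      ext i k
      rcases i with j | j <;> rcases k with k | k <;>
        simp [sumEquiv, Matrix.reindex_apply, hMe, Complex.basisOneI]
    rw [hblocks]
    -- triangularize
    set P := B.map (fun z => (z.re : ℂ))
    set Q := B.map (fun z => (z.im : ℂ))
    have hL : Matrix.fromBlocks (1 : Matrix (Fin m) (Fin m) ℂ) (Complex.I • 1) 0 1
        * Matrix.fromBlocks P (-Q) Q P
        * Matrix.fromBlocks 1 (-(Complex.I) • 1) 0 1
        = Matrix.fromBlocks (P + Complex.I • Q) 0 Q (P - Complex.I • Q) := by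
      simp [Matrix.fromBlocks_multiply, Matrix.smul_mul, Matrix.mul_smul, smul_smul,
        Complex.I_mul_I, add_comm, sub_eq_add_neg]
      try constructor
      all_goals module
    have hdet : (Matrix.fromBlocks P (-Q) Q P).det
        = (P + Complex.I • Q).det * (P - Complex.I • Q).det := by
      have := congrArg Matrix.det hL
      simpa [Matrix.det_mul, Matrix.det_fromBlocks_zero₂₁,
        Matrix.det_fromBlocks_zero₁₂] using this
    rw [hdet]
    have h1 : P + Complex.I • Q = B := by
      ext j k; simp [P, Q, Complex.mk_eq_add_mul_I]; ring_nf
      rw [mul_comm, Complex.re_add_im]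
    have h2 : P - Complex.I • Q = B.map (starRingEnd ℂ) := by
      ext j k
      simp [P, Q, Complex.ext_iff]
    rw [h1, h2, ← RingHom.mapMatrix_apply, ← RingHom.map_det, Complex.mul_conj]
  exact_mod_cast key


lemma vol_preimage (m : ℕ) (B : Matrix (Fin m) (Fin m) ℂ) (hB : B.det ≠ 0)
    (s : Set (Fin m → ℂ)) :
    (volume ((fun v => B.mulVec v) ⁻¹' s) : ENNReal)
      = ENNReal.ofReal (Complex.normSq B.det)⁻¹ * volume s := by
  have hd : LinearMap.det ((Matrix.toLin' B).restrictScalars ℝ) ≠ 0 := by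
    rw [detReal_eq]
    simpa using hB
  have := MeasureTheory.Measure.addHaar_preimage_linearMap (volume : Measure (Fin m → ℂ)) hd s
  have hfun : ⇑((Matrix.toLin' B).restrictScalars ℝ) = fun v => B.mulVec v := by
    ext v j; simp [Matrix.toLin'_apply]
  rw [hfun] at this
  rw [this, detReal_eq, abs_of_nonneg (inv_nonneg.mpr (Complex.normSq_nonneg _))]

lemma scaling (m : ℕ) (t : ℝ) (ht : 0 < t) :
    (volume {w : Fin m → ℂ | ∑ j, ‖w j‖ ^ 2 ≤ t})
      = ENNReal.ofReal (t ^ m) * volume {w : Fin m → ℂ | ∑ j, ‖w j‖ ^ 2 ≤ 1} := by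
  have hs : Real.sqrt t ≠ 0 := by positivity
  have hset : {w : Fin m → ℂ | ∑ j, ‖w j‖ ^ 2 ≤ t}
      = Real.sqrt t • {w : Fin m → ℂ | ∑ j, ‖w j‖ ^ 2 ≤ 1} := by
    ext w
    rw [Set.mem_smul_set_iff_inv_smul_mem₀ hs]
    simp only [Set.mem_setOf_eq, Pi.smul_apply, norm_smul]
    have e1 : ∀ x : Fin m, (‖(Real.sqrt t)⁻¹‖ * ‖w x‖) ^ 2 = t⁻¹ * ‖w x‖ ^ 2 := by
      intro x
      rw [mul_pow, norm_inv, Real.norm_eq_abs, abs_of_nonneg (Real.sqrt_nonneg t),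
        ← Real.sqrt_inv, Real.sq_sqrt (by positivity)]
    rw [Finset.sum_congr rfl fun x _ => e1 x, ← Finset.mul_sum, inv_mul_le_iff₀ ht, mul_one]
  rw [hset, MeasureTheory.Measure.addHaar_smul_of_nonneg volume (Real.sqrt_nonneg t)]
  congr 1
  have hrank : Module.finrank ℝ (Fin m → ℂ) = m * 2 := by
    simp [Module.finrank_pi_fintype, Complex.finrank_real_complex, Finset.sum_const]
  rw [hrank, mul_comm m 2, pow_mul, Real.sq_sqrt ht.le]

/-- The standard complex Gaussian measure on `ℂ^d`, with density `π^{-d} e^{-‖v‖²}`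
with respect to Lebesgue measure. -/
noncomputable def stdGaussian (d : ℕ) : Measure (Fin d → ℂ) :=
  (volume : Measure (Fin d → ℂ)).withDensity
    (fun v => ENNReal.ofReal (Real.exp (-∑ j, ‖v j‖ ^ 2) / Real.pi ^ d))

/-- The Lebesgue volume of the unit ball of `ℂ^m ≃ ℝ^{2m}`. -/
noncomputable def unitBallVol (m : ℕ) : ℝ :=
  ((volume : Measure (Fin m → ℂ)) {ξ | ∑ j, ‖ξ j‖ ^ 2 ≤ 1}).toReal

theorem stmt_7 (m : ℕ) (hm : 1 ≤ m) (A : Matrix (Fin m) (Fin m) ℂ) (hA : A.PosDef)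
    (t : ℝ) (ht : 0 < t) :
    (stdGaussian m {v | (star v ⬝ᵥ A.mulVec v).re ≤ t}).toReal ≤
      unitBallVol m * t ^ m / (Real.pi ^ m * A.det.re) := by
  classical
  open scoped MatrixOrder in set B := CFC.sqrt A with hBdef
  open scoped MatrixOrder in have hBH : B.IsHermitian := (CFC.sqrt_nonneg A).posSemidef.1
  open scoped MatrixOrder in have hBB : B * B = A := CFC.sqrt_mul_sqrt_self A hA.posSemidef.nonneg
  have hAdet : (0 : ℂ) < A.det := hA.det_pos
  have hAre : 0 < A.det.re := (Complex.lt_def.mp hAdet).1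
  have hBdet2 : B.det * B.det = A.det := by rw [← Matrix.det_mul, hBB]
  have hBim : B.det.im = 0 := by
    have h1 : star B.det = B.det := by rw [← Matrix.det_conjTranspose, hBH]
    have h2 := congrArg Complex.im h1
    simp only [Complex.star_def, Complex.conj_im] at h2
    linarith
  have hnormSq : Complex.normSq B.det = A.det.re := by
    rw [← hBdet2, Complex.normSq_apply, Complex.mul_re, hBim]
    ring
  have hBne : B.det ≠ 0 := by
    intro h
    rw [h, mul_zero] at hBdet2
    rw [← hBdet2] at hAre
    simp at hAre
  -- quadratic form identity
  have hquad : ∀ v : Fin m → ℂ, (star v ⬝ᵥ A.mulVec v).re = ∑ j, ‖B.mulVec v j‖ ^ 2 := by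
    intro v
    have h1 : A.mulVec v = B.mulVec (B.mulVec v) := by rw [Matrix.mulVec_mulVec, hBB]
    rw [h1, Matrix.dotProduct_mulVec, show star v ᵥ* B = star (B.mulVec v) by
      rw [Matrix.star_mulVec, hBH]]
    rw [dotProduct, Complex.re_sum]
    refine Finset.sum_congr rfl fun j _ => ?_
    simp [Complex.mul_re, Complex.sq_norm, Complex.normSq_apply]
    try ring
  set T : Set (Fin m → ℂ) := {w | ∑ j, ‖w j‖ ^ 2 ≤ t} with hTdef
  set T1 : Set (Fin m → ℂ) := {w | ∑ j, ‖w j‖ ^ 2 ≤ 1} with hT1def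
  set S : Set (Fin m → ℂ) := {v | (star v ⬝ᵥ A.mulVec v).re ≤ t} with hSdef
  have hST : S = (fun v => B.mulVec v) ⁻¹' T := by
    ext v
    simp [hSdef, hTdef, hquad v]
  have hmeasf : Measurable (fun v : Fin m → ℂ => B.mulVec v) := by
    have : Continuous fun v : Fin m → ℂ => B.mulVec v := by
      have hc := LinearMap.continuous_of_finiteDimensional ((Matrix.toLin' B).restrictScalars ℝ)
      have hfun : ⇑((Matrix.toLin' B).restrictScalars ℝ) = fun v => B.mulVec v := by
        ext v j; simp [Matrix.toLin'_apply]
      rwa [hfun] at hc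
    exact this.measurable
  have hcontsum : Continuous fun w : Fin m → ℂ => ∑ j, ‖w j‖ ^ 2 := by fun_prop
  have hT : MeasurableSet T := measurableSet_le hcontsum.measurable measurable_const
  have hS : MeasurableSet S := hST ▸ hmeasf hT
  -- Step A
  have stepA : stdGaussian m S ≤ ENNReal.ofReal (1 / Real.pi ^ m) * volume S := by
    rw [stdGaussian, withDensity_apply _ hS]
    calc ∫⁻ v in S, ENNReal.ofReal (Real.exp (-∑ j, ‖v j‖ ^ 2) / Real.pi ^ m) ∂volume
        ≤ ∫⁻ _ in S, ENNReal.ofReal (1 / Real.pi ^ m) ∂volume := by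
          refine lintegral_mono fun v => ENNReal.ofReal_le_ofReal ?_
          gcongr
          all_goals first
            | positivity
            | exact Real.exp_le_one_iff.mpr (neg_nonpos.mpr (by positivity))
      _ = ENNReal.ofReal (1 / Real.pi ^ m) * volume S := by
          rw [setLIntegral_const]
  -- Step B
  have stepB : volume S = ENNReal.ofReal (A.det.re)⁻¹ * volume T := by
    rw [hST, vol_preimage m B hBne T, hnormSq]
  -- Step C
  have stepC : volume T = ENNReal.ofReal (t ^ m) * volume T1 := scaling m t ht
  -- finiteness
  have hT1fin : volume T1 < ⊤ := by
    refine lt_of_le_of_lt (measure_mono ?_) (measure_closedBall_lt_top (x := (0 : Fin m → ℂ))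
      (r := 1))
    intro w hw
    rw [Metric.mem_closedBall, dist_zero_right, pi_norm_le_iff_of_nonneg zero_le_one]
    intro i
    have hw' : ∑ j, ‖w j‖ ^ 2 ≤ 1 := hw
    have h2 : ‖w i‖ ^ 2 ≤ 1 :=
      le_trans (Finset.single_le_sum (f := fun j => ‖w j‖ ^ 2)
        (fun j _ => by positivity) (Finset.mem_univ i)) hw'
    exact (pow_le_one_iff_of_nonneg (norm_nonneg _) two_ne_zero).mp h2
  have hle : stdGaussian m S ≤ ENNReal.ofReal (1 / Real.pi ^ m) *
      (ENNReal.ofReal (A.det.re)⁻¹ * (ENNReal.ofReal (t ^ m) * volume T1)) := by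
    calc stdGaussian m S ≤ ENNReal.ofReal (1 / Real.pi ^ m) * volume S := stepA
      _ = _ := by rw [stepB, stepC]
  have hfin : ENNReal.ofReal (1 / Real.pi ^ m) *
      (ENNReal.ofReal (A.det.re)⁻¹ * (ENNReal.ofReal (t ^ m) * volume T1)) ≠ ⊤ := by
    exact ENNReal.mul_ne_top ENNReal.ofReal_ne_top (ENNReal.mul_ne_top ENNReal.ofReal_ne_top
      (ENNReal.mul_ne_top ENNReal.ofReal_ne_top hT1fin.ne))
  have := ENNReal.toReal_mono hfin hle
  refine le_trans this ?_
  rw [ENNReal.toReal_mul, ENNReal.toReal_mul, ENNReal.toReal_mul,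
    ENNReal.toReal_ofReal (by positivity), ENNReal.toReal_ofReal (by positivity),
    ENNReal.toReal_ofReal (by positivity)]
  have hub : (volume T1).toReal = unitBallVol m := rfl
  rw [hub]
  have hubnn : 0 ≤ unitBallVol m := ENNReal.toReal_nonneg
  apply le_of_eq
  field_simp
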